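/- For every positive integer n, one has √(2πn)·(n/e)^n < n! < √(2πn)·(n/e)^n·e^(1/(12n)). -/

import Mathlib

open Real Finset

namespace RobbinsAux

lemma logTaylor7 (x : ℝ) (hx : 0 < x) (hx3 : x ≤ 1/3) :
    |Real.log (1+x) - Real.log (1-x) - (2*x + 2*x^3/3 + 2*x^5/5 + 2*x^7/7)| ≤ 2*x^8/(1-x) := by
  have h1 : |x| < 1 := by rw [abs_of_pos hx]; linarith
  have h2 : |(-x)| < 1 := by rw [abs_neg]; exact h1
  have A := Real.abs_log_sub_add_sum_range_le h1 7
  have B := Real.abs_log_sub_add_sum_range_le h2 7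
  rw [abs_of_pos hx] at A
  rw [abs_neg, abs_of_pos hx] at B
  simp only [Finset.sum_range_succ, Finset.sum_range_zero] at A B
  norm_num at A B
  ring_nf at B
  rw [abs_le] at A B ⊢
  rw [div_eq_mul_inv] at A
  rw [show 2*x^8/(1-x) = 2*(x^8*(1-x)⁻¹) by ring]
  constructor <;> linarith [A.1, A.2, B.1, B.2]

lemma key_ineq (x : ℝ) (hx : 0 < x) (hx3 : x ≤ 1/3) :
    1 < (Real.log (1+x) - Real.log (1-x)) / (2*x) ∧
    (Real.log (1+x) - Real.log (1-x)) / (2*x) - 1 < x^2/(3*(1-x^2)) := by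
  have h1x : (0:ℝ) < 1 - x := by linarith
  have h1x2 : (0:ℝ) < 1 - x^2 := by nlinarith
  have h2x : (0:ℝ) < 2*x := by linarith
  have L := abs_le.mp (logTaylor7 x hx hx3)
  set D := Real.log (1+x) - Real.log (1-x) with hD
  rw [show 2*x^8/(1-x) = 2*(x^8/(1-x)) by ring] at L
  have e1 : x^8/(1-x) ≤ x^3/162 := by
    rw [div_le_iff₀ h1x]
    nlinarith [mul_le_mul_of_nonneg_left (show x^2 ≤ (1:ℝ)/9 by nlinarith) (pow_pos hx 3).le,
      mul_le_mul_of_nonneg_left (show x^2 ≤ (1:ℝ)/9 by nlinarith) (pow_pos hx 5).le, hx3, hx.le]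
  have e3 : x^3/3 + x^5/3 ≤ x^3/(3*(1-x^2)) := by
    rw [le_div_iff₀ (by positivity : (0:ℝ) < 3*(1-x^2))]
    nlinarith [pow_pos hx 5, pow_pos hx 7]
  have e1b : x^8/(1-x) ≤ x^5/18 := by
    rw [div_le_iff₀ h1x]
    nlinarith [mul_le_mul_of_nonneg_left (show x^2 ≤ (1:ℝ)/9 by nlinarith) (pow_pos hx 3).le,
      mul_le_mul_of_nonneg_left (show x^2 ≤ (1:ℝ)/9 by nlinarith) (pow_pos hx 5).le, hx3, hx.le]
  have e4 : x^7 ≤ x^5/9 := by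
    nlinarith [mul_le_mul_of_nonneg_left (show x^2 ≤ (1:ℝ)/9 by nlinarith) (pow_pos hx 5).le]
  have e5 : x^5 ≤ x^3/9 := by
    nlinarith [mul_le_mul_of_nonneg_left (show x^2 ≤ (1:ℝ)/9 by nlinarith) (pow_pos hx 3).le]
  constructor
  · rw [lt_div_iff₀ h2x]
    linarith [L.1, e1, pow_pos hx 3, pow_pos hx 5, pow_pos hx 7, e4, e5]
  · rw [sub_lt_iff_lt_add, div_lt_iff₀ h2x]
    have expand : (x^2/(3*(1-x^2)) + 1) * (2*x) = 2*x + 2*(x^3/(3*(1-x^2))) := by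
      field_simp; ring
    rw [expand]
    linarith [L.2, e1b, e3, pow_pos hx 3, pow_pos hx 5, pow_pos hx 7, e4, e5]

lemma step_bounds (n : ℕ) (hn : 1 ≤ n) :
    1 < ((n:ℝ) + 1/2) * (Real.log (n+1) - Real.log n) ∧
    ((n:ℝ) + 1/2) * (Real.log (n+1) - Real.log n) - 1 < 1/(12*(n:ℝ)) - 1/(12*((n:ℝ)+1)) := by
  have hN : (1:ℝ) ≤ n := by exact_mod_cast hn
  set N := (n:ℝ) with hNdef
  have hNpos : 0 < N := by linarith
  set x : ℝ := 1/(2*N+1) with hxdef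
  have hx : 0 < x := by positivity
  have hx3 : x ≤ 1/3 := by
    rw [hxdef, div_le_div_iff₀ (by linarith) (by norm_num)]; linarith
  have hlog : Real.log (N+1) - Real.log N = Real.log (1+x) - Real.log (1-x) := by
    have h1 : (1:ℝ) + x = (2*N+2)/(2*N+1) := by rw [hxdef]; field_simp; ring
    have h2 : (1:ℝ) - x = (2*N)/(2*N+1) := by rw [hxdef]; field_simp; ring
    rw [h1, h2, Real.log_div (by linarith) (by linarith),
      Real.log_div (by linarith) (by linarith)]
    have h3 : Real.log (2*N+2) = Real.log 2 + Real.log (N+1) := by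
      rw [← Real.log_mul (by norm_num) (by linarith)]; ring_nf
    have h4 : Real.log (2*N) = Real.log 2 + Real.log N := by
      rw [← Real.log_mul (by norm_num) (by linarith)]
    rw [h3, h4]; ring
  have hmul : (N + 1/2) * (Real.log (N+1) - Real.log N)
      = (Real.log (1+x) - Real.log (1-x)) / (2*x) := by
    rw [hlog, show (2:ℝ)*x = 2/(2*N+1) from by rw [hxdef]; ring, div_div_eq_mul_div]
    ring
  have hrhs : 1/(12*N) - 1/(12*(N+1)) = x^2/(3*(1-x^2)) := by
    have hx2 : x^2 ≤ 1/9 := by nlinarith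
    have L : 1/(12*N) - 1/(12*(N+1)) = 1/(12*N*(N+1)) := by
      field_simp
      ring
    rw [L, div_eq_div_iff (by positivity) (by nlinarith : (3*(1-x^2)) ≠ 0)]
    rw [hxdef]
    field_simp
    ring
  have K := key_ineq x hx hx3
  constructor
  · rw [hmul]; exact K.1
  · rw [hmul, hrhs]; exact K.2

noncomputable def cseq (n : ℕ) : ℝ :=
  Real.log (n.factorial) - ((n:ℝ) + 1/2) * Real.log n + n

lemma cseq_step (n : ℕ) (hn : 1 ≤ n) :
    cseq n - cseq (n+1) = ((n:ℝ)+1/2) * (Real.log (n+1) - Real.log n) - 1 := by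
  have hNpos : (0:ℝ) < n := by exact_mod_cast hn
  have hfact : ((n+1).factorial : ℝ) = ((n:ℝ)+1) * (n.factorial : ℝ) := by
    push_cast [Nat.factorial_succ]; ring
  have hfpos : (0:ℝ) < (n.factorial : ℝ) := by exact_mod_cast n.factorial_pos
  unfold cseq
  rw [hfact, Real.log_mul (by linarith) (by linarith)]
  push_cast
  ring

open Filter Topology in
lemma cseq_tendsto :
    Tendsto cseq atTop (𝓝 ((1/2) * Real.log (2*π))) := by
  have hst := Stirling.tendsto_stirlingSeq_sqrt_pi
  have hπ : (0:ℝ) < π := Real.pi_pos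
  have hlog : Tendsto (fun n => Real.log (Stirling.stirlingSeq n)) atTop
      (𝓝 (Real.log (Real.sqrt π))) :=
    (Real.continuousAt_log (by positivity)).tendsto.comp hst
  have heq : ∀ᶠ n in atTop, Real.log (Stirling.stirlingSeq n) + (1/2) * Real.log 2 = cseq n := by
    filter_upwards [eventually_ge_atTop 1] with n hn
    have hNpos : (0:ℝ) < n := by exact_mod_cast hn
    have hfpos : (0:ℝ) < (n.factorial : ℝ) := by exact_mod_cast n.factorial_pos
    have hne : ((n:ℝ)/Real.exp 1) ≠ 0 := by positivity
    have hsq : (0:ℝ) < Real.sqrt (2*n) := Real.sqrt_pos.mpr (by positivity)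
    rw [Stirling.stirlingSeq, Real.log_div hfpos.ne' (by positivity),
      Real.log_mul hsq.ne' (pow_ne_zero _ hne), Real.log_pow,
      Real.log_div hNpos.ne' (Real.exp_ne_zero 1), Real.log_exp,
      Real.log_sqrt (by positivity), Real.log_mul (by norm_num) hNpos.ne']
    unfold cseq
    push_cast
    ring
  have : Tendsto (fun n => Real.log (Stirling.stirlingSeq n) + (1/2) * Real.log 2) atTop
      (𝓝 (Real.log (Real.sqrt π) + (1/2) * Real.log 2)) := hlog.add_const _
  have h2 : Real.log (Real.sqrt π) + (1/2) * Real.log 2 = (1/2) * Real.log (2*π) := by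
    rw [Real.log_sqrt hπ.le, Real.log_mul (by norm_num) hπ.ne']
    ring
  rw [h2] at this
  exact this.congr' heq

open Filter Topology in
lemma cseq_bounds (n : ℕ) (hn : 1 ≤ n) :
    (1/2) * Real.log (2*π) < cseq n ∧
    cseq n < (1/2) * Real.log (2*π) + 1/(12*(n:ℝ)) := by
  set L := (1/2) * Real.log (2*π) with hL
  -- strict decrease of cseq
  have hdec : ∀ m : ℕ, 1 ≤ m → cseq (m+1) < cseq m := by
    intro m hm
    have h := (step_bounds m hm).1
    have hs := cseq_step m hm
    linarith
  -- strict increase of cseq - 1/(12n)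
  have hinc : ∀ m : ℕ, 1 ≤ m →
      cseq m - 1/(12*(m:ℝ)) < cseq (m+1) - 1/(12*((m:ℝ)+1)) := by
    intro m hm
    have h := (step_bounds m hm).2
    have hs := cseq_step m hm
    linarith
  constructor
  · -- L ≤ cseq (n+1) < cseq n
    have hle : ∀ m : ℕ, n+1 ≤ m → cseq m ≤ cseq (n+1) := by
      intro m hm
      induction m, hm using Nat.le_induction with
      | base => exact le_refl _
      | succ k hk ih => exact le_trans (hdec k (by omega)).le ih
    have hLle : L ≤ cseq (n+1) :=
      le_of_tendsto cseq_tendsto (eventually_atTop.mpr ⟨n+1, hle⟩)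
    linarith [hdec n hn]
  · have hle : ∀ m : ℕ, n+1 ≤ m → cseq (n+1) - 1/(12*((n:ℝ)+1)) ≤ cseq m - 1/(12*(m:ℝ)) := by
      intro m hm
      induction m, hm using Nat.le_induction with
      | base => push_cast; exact le_refl _
      | succ k hk ih =>
        have h2 := (hinc k (by omega)).le
        push_cast
        push_cast at ih h2
        linarith
    have htd : Tendsto (fun m : ℕ => cseq m - 1/(12*(m:ℝ))) atTop (𝓝 L) := by
      have h0 : Tendsto (fun m : ℕ => 1/(12*(m:ℝ))) atTop (𝓝 0) := by
        have h0' := (tendsto_one_div_atTop_nhds_zero_nat).const_mul (1/12 : ℝ)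
        rw [mul_zero] at h0'
        refine h0'.congr fun m => ?_
        rw [div_mul_div_comm, one_mul]
      have htd' := cseq_tendsto.sub h0
      simp only [sub_zero] at htd'
      exact htd'
    have hLge : cseq (n+1) - 1/(12*((n:ℝ)+1)) ≤ L :=
      ge_of_tendsto htd (eventually_atTop.mpr ⟨n+1, hle⟩)
    have := hinc n hn
    push_cast at hLge ⊢
    linarith

end RobbinsAux

open RobbinsAux in

theorem robbins_stirling (n : ℕ) (hn : 0 < n) :
    Real.sqrt (2 * π * n) * ((n : ℝ) / Real.exp 1) ^ n < (n.factorial : ℝ) ∧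
    (n.factorial : ℝ) < Real.sqrt (2 * π * n) * ((n : ℝ) / Real.exp 1) ^ n *
      Real.exp (1 / (12 * n)) := by
  obtain ⟨hlb, hub⟩ := cseq_bounds n hn
  have hNpos : (0:ℝ) < n := by exact_mod_cast hn
  have hfpos : (0:ℝ) < (n.factorial:ℝ) := by exact_mod_cast n.factorial_pos
  have hπ := Real.pi_pos
  have hPpos : 0 < Real.sqrt (2*π*n) * ((n:ℝ)/Real.exp 1)^n := by positivity
  have hlogP : Real.log (Real.sqrt (2*π*n) * ((n:ℝ)/Real.exp 1)^n)
      = (1/2)*Real.log (2*π) + (1/2)*Real.log n + n*Real.log n - n := by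
    rw [Real.log_mul (by positivity) (by positivity), Real.log_pow,
      Real.log_div hNpos.ne' (Real.exp_ne_zero 1), Real.log_exp,
      Real.log_sqrt (by positivity), Real.log_mul (by positivity) hNpos.ne']
    ring
  have hlogF : Real.log (n.factorial:ℝ) = cseq n + ((n:ℝ)+1/2)*Real.log n - n := by
    unfold cseq; ring
  constructor
  · rw [← Real.exp_log hPpos, ← Real.exp_log hfpos, Real.exp_lt_exp, hlogP, hlogF]
    linarith
  · have hQ : (0:ℝ) < Real.sqrt (2*π*n) * ((n:ℝ)/Real.exp 1)^n * Real.exp (1/(12*n)) := by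
      positivity
    rw [← Real.exp_log hfpos, ← Real.exp_log hQ, Real.exp_lt_exp,
      Real.log_mul hPpos.ne' (Real.exp_ne_zero _), Real.log_exp, hlogP, hlogF]
    linarith
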